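/- Let S and T be semigroups. If S satisfies M_L and T satisfies M_R, then every (S,T)-biact satisfies both M_L and M_R. -/

import Mathlib

/-! Green's preorders and equivalences on an `(S,T)`-biact, given by the left
action `sm : S → A → A` and the right action `rm : A → T → A`. -/

section BiactDefs

variable {S T A : Type*}

/-- `a ≤_L b` iff `a = b` or `a = s · b` for some `s ∈ S`. -/
def leLAct (sm : S → A → A) (a b : A) : Prop :=
  a = b ∨ ∃ s, a = sm s b

/-- `a ≤_R b` iff `a = b` or `a = b · t` for some `t ∈ T`. -/
def leRAct (rm : A → T → A) (a b : A) : Prop :=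
  a = b ∨ ∃ t, a = rm b t

/-- `a ≤_J b` iff `a = b`, or `a = s · b`, or `a = b · t`, or `a = s · b · t`. -/
def leJAct (sm : S → A → A) (rm : A → T → A) (a b : A) : Prop :=
  a = b ∨ (∃ s, a = sm s b) ∨ (∃ t, a = rm b t) ∨ ∃ s t, a = rm (sm s b) t

/-- Green's relation `L` on a biact. -/
def eqvLAct (sm : S → A → A) (a b : A) : Prop :=
  leLAct sm a b ∧ leLAct sm b a

/-- Green's relation `R` on a biact. -/
def eqvRAct (rm : A → T → A) (a b : A) : Prop :=
  leRAct rm a b ∧ leRAct rm b a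

/-- Green's relation `J` on a biact. -/
def eqvJAct (sm : S → A → A) (rm : A → T → A) (a b : A) : Prop :=
  leJAct sm rm a b ∧ leJAct sm rm b a

/-- `(sm, rm)` constitutes an `(S,T)`-biact structure on `A`. -/
def IsBiact [Semigroup S] [Semigroup T] (sm : S → A → A) (rm : A → T → A) : Prop :=
  (∀ (s s' : S) (a : A), sm s (sm s' a) = sm (s * s') a) ∧
  (∀ (a : A) (t t' : T), rm (rm a t) t' = rm a (t * t')) ∧
  (∀ (s : S) (a : A) (t : T), rm (sm s a) t = sm s (rm a t))

/-- The minimal condition `M_L`: every descending `≤_L`-chain eventually stabilises. -/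
def MinLAct (sm : S → A → A) : Prop :=
  ∀ f : ℕ → A, (∀ n, leLAct sm (f (n + 1)) (f n)) →
    ∃ m, ∀ n ≥ m, eqvLAct sm (f m) (f n)

/-- The minimal condition `M_R`. -/
def MinRAct (rm : A → T → A) : Prop :=
  ∀ f : ℕ → A, (∀ n, leRAct rm (f (n + 1)) (f n)) →
    ∃ m, ∀ n ≥ m, eqvRAct rm (f m) (f n)

/-- The minimal condition `M_J`. -/
def MinJAct (sm : S → A → A) (rm : A → T → A) : Prop :=
  ∀ f : ℕ → A, (∀ n, leJAct sm rm (f (n + 1)) (f n)) →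
    ∃ m, ∀ n ≥ m, eqvJAct sm rm (f m) (f n)

/-- A biact is left stable if `(s · a) J a` implies `(s · a) L a`. -/
def LeftStableAct (sm : S → A → A) (rm : A → T → A) : Prop :=
  ∀ (a : A) (s : S), eqvJAct sm rm (sm s a) a → eqvLAct sm (sm s a) a

/-- A biact is right stable if `(a · t) J a` implies `(a · t) R a`. -/
def RightStableAct (sm : S → A → A) (rm : A → T → A) : Prop :=
  ∀ (a : A) (t : T), eqvJAct sm rm (rm a t) a → eqvRAct rm (rm a t) a

/-- A biact is stable if it is left and right stable. -/
def StableAct (sm : S → A → A) (rm : A → T → A) : Prop :=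
  LeftStableAct sm rm ∧ RightStableAct sm rm

/-- A biact is `L`-periodic if for all `s, a` there is `n ≥ 1` with `(sⁿ · a) L (sⁿ⁺¹ · a)`. -/
def LPeriodicAct (sm : S → A → A) : Prop :=
  ∀ (s : S) (a : A), ∃ n : ℕ, 1 ≤ n ∧ eqvLAct sm ((sm s)^[n] a) ((sm s)^[n + 1] a)

/-- A biact is `R`-periodic if for all `t, a` there is `n ≥ 1` with `(a · tⁿ) R (a · tⁿ⁺¹)`. -/
def RPeriodicAct (rm : A → T → A) : Prop :=
  ∀ (t : T) (a : A), ∃ n : ℕ, 1 ≤ n ∧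
    eqvRAct rm ((fun x => rm x t)^[n] a) ((fun x => rm x t)^[n + 1] a)

end BiactDefs


private theorem biact_key {S A : Type*} (mul : S → S → S) (sm : S → A → A)
    (hassoc : ∀ (s s' : S) (a : A), sm s (sm s' a) = sm (mul s s') a)
    (hS : ∀ f : ℕ → S, (∀ n, f (n+1) = f n ∨ ∃ s, f (n+1) = mul s (f n)) →
      ∃ m, ∀ n ≥ m, (f m = f n ∨ ∃ s, f m = mul s (f n)) ∧
        (f n = f m ∨ ∃ s, f n = mul s (f m)))
    (f : ℕ → A) (hf : ∀ n, f (n+1) = f n ∨ ∃ s, f (n+1) = sm s (f n)) :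
    ∃ m, ∀ n ≥ m, (f m = f n ∨ ∃ s, f m = sm s (f n)) ∧
      (f n = f m ∨ ∃ s, f n = sm s (f m)) := by
  classical
  set σ : ℕ → Option S := fun n =>
    if h : ∃ s, f (n+1) = sm s (f n) then some h.choose else none with hσ
  have hstep : ∀ n, f (n+1) = (σ n).elim (f n) (fun s => sm s (f n)) := by
    intro n
    by_cases h : ∃ s, f (n+1) = sm s (f n)
    · simp only [hσ, dif_pos h]; exact h.choose_spec
    · simp only [hσ, dif_neg h]; exact (hf n).resolve_right h
  by_cases hall : ∀ n, σ n = none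
  · have hconst : ∀ n, f n = f 0 := by
      intro n; induction n with
      | zero => rfl
      | succ n ih => rw [hstep n, hall n]; exact ih
    exact ⟨0, fun n _ => ⟨Or.inl (hconst n).symm, Or.inl (hconst n)⟩⟩
  · push_neg at hall
    obtain ⟨n0, hn0⟩ := hall
    obtain ⟨u, hu⟩ : ∃ u, σ n0 = some u := Option.ne_none_iff_exists'.mp hn0
    set c : ℕ → S :=
      fun n => Nat.rec u (fun k ih => (σ (n0+1+k)).elim ih (fun v => mul v ih)) n with hc
    have hcsucc : ∀ n, c (n+1) = (σ (n0+1+n)).elim (c n) (fun v => mul v (c n)) :=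
      fun n => rfl
    have hinv : ∀ n, f (n0+1+n) = sm (c n) (f n0) := by
      intro n; induction n with
      | zero =>
        have h0 := hstep n0
        rw [hu] at h0
        exact h0
      | succ n ih =>
        have h1 := hstep (n0+1+n)
        have he : n0+1+(n+1) = (n0+1+n)+1 := by omega
        rw [he, h1, hcsucc]
        cases hv : σ (n0+1+n) with
        | none => simpa using ih
        | some v => simp only [Option.elim]; rw [ih, hassoc]
    have hcchain : ∀ n, c (n+1) = c n ∨ ∃ s, c (n+1) = mul s (c n) := by
      intro n
      rw [hcsucc]
      cases σ (n0+1+n) with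
      | none => exact Or.inl rfl
      | some v => exact Or.inr ⟨v, rfl⟩
    obtain ⟨m, hm⟩ := hS c hcchain
    refine ⟨n0+1+m, fun n hn => ?_⟩
    obtain ⟨k, rfl, hkm⟩ : ∃ k, n = n0+1+k ∧ m ≤ k := ⟨n - (n0+1), by omega, by omega⟩
    obtain ⟨h1, h2⟩ := hm k hkm
    constructor
    · rcases h1 with e | ⟨s, e⟩
      · exact Or.inl (by rw [hinv m, hinv k, e])
      · exact Or.inr ⟨s, by rw [hinv m, hinv k, e, ← hassoc]⟩
    · rcases h2 with e | ⟨s, e⟩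
      · exact Or.inl (by rw [hinv m, hinv k, e])
      · exact Or.inr ⟨s, by rw [hinv m, hinv k, e, ← hassoc]⟩

/-- If `S` satisfies `M_L` and `T` satisfies `M_R`, then every `(S,T)`-biact
satisfies both `M_L` and `M_R`. -/
theorem biact_minL_and_minR_of_semigroups {S T A : Type*} [Semigroup S] [Semigroup T]
    (hS : MinLAct (fun (s a : S) => s * a))
    (hT : MinRAct (fun (a t : T) => a * t))
    (sm : S → A → A) (rm : A → T → A) (hbi : IsBiact sm rm) :
    MinLAct sm ∧ MinRAct rm := by
  obtain ⟨h1, h2, h3⟩ := hbi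
  constructor
  · exact fun f hf => biact_key (fun s s' => s * s') sm h1 hS f hf
  · exact fun f hf => biact_key (fun t t' => t' * t) (fun t a => rm a t)
      (fun t t' a => h2 a t' t) hT f hf
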